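/- arXiv:2307.16665 — 5 statements merged into one kernel-verified Lean document; each statement's English description precedes it below -/
import Mathlib

section
/- Let d ∈ ℕ with d ≥ 1, let (λ_n)_{n∈ℕ} be a strictly increasing sequence of positive real numbers for which there exist c₀ > 0 and n₀ ∈ ℕ with λ_n ≥ c₀ n^{2/d} for all n ≥ n₀, and let (a_n)_{n∈ℕ} be a real sequence with Σ_{n=1}^∞ |a_n|² < ∞. Let (ℓ_k)_{k∈ℕ} ⊂ ℕ satisfy lim_{k→∞} ℓ_k = ∞. If for every k ∈ ℕ the series Σ_{n=1}^∞ a_n λ_n^{−ℓ_k} converges absolutely and Σ_{n=1}^∞ a_n λ_n^{−ℓ_k} = 0, then a_n = 0 for all n ∈ ℕ. -/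
/-- Lemma 6: if `(λ_n)` is strictly increasing and grows at least like `n^{2/d}`,
`(a_n)` is square-summable, and `Σ_n a_n λ_n^{−ℓ_k} = 0` (absolutely convergent)
for a sequence `ℓ_k → ∞`, then all `a_n` vanish. -/
theorem all_coeffs_zero_of_vanishing_sums (d : ℕ) (hd : 1 ≤ d)
    (lam : ℕ → ℝ) (hpos : ∀ n, 0 < lam n) (hmono : StrictMono lam)
    (c₀ : ℝ) (hc₀ : 0 < c₀) (n₀ : ℕ)
    (hgrowth : ∀ n ≥ n₀, c₀ * (n : ℝ) ^ ((2 : ℝ) / d) ≤ lam n)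
    (a : ℕ → ℝ) (ha : Summable fun n => |a n| ^ 2)
    (ℓ : ℕ → ℕ) (hℓ : Filter.Tendsto ℓ Filter.atTop Filter.atTop)
    (habs : ∀ k, Summable fun n => |a n / lam n ^ ℓ k|)
    (hsum : ∀ k, ∑' n, a n / lam n ^ ℓ k = 0) :
    ∀ n, a n = 0 := by
  by_contra h
  push_neg at h
  have hex : ∃ n, a n ≠ 0 := h
  set m := Nat.find hex with hmdef
  have ham : a m ≠ 0 := Nat.find_spec hex
  have hlt : ∀ i < m, a i = 0 := by
    intro i hi
    by_contra hai
    exact absurd hi (not_lt.mpr (Nat.find_le hai))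
  set L₀ := ℓ 0 with hL₀
  set S := ∑' n, |a n / lam n ^ L₀| with hS
  have hS0 : 0 ≤ S := tsum_nonneg fun n => abs_nonneg _
  set r := lam m / lam (m + 1) with hr
  have hlam1 : 0 < lam (m + 1) := hpos _
  have hr0 : 0 ≤ r := le_of_lt (div_pos (hpos m) hlam1)
  have hr1 : r < 1 := (div_lt_one hlam1).mpr (hmono (Nat.lt_succ_self m))
  -- key estimate for each k with ℓ k ≥ L₀
  have key : ∀ k, L₀ ≤ ℓ k → |a m| ≤ S * lam (m + 1) ^ L₀ * r ^ ℓ k := by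
    intro k hk
    set L := ℓ k with hLdef
    have hsummf : Summable fun n => a n / lam n ^ L := (habs k).of_abs
    have hsplit := Summable.tsum_eq_add_tsum_ite hsummf m
    rw [hsum k] at hsplit
    have hfm : a m / lam m ^ L = - ∑' n, (if n = m then 0 else a n / lam n ^ L) := by
      linarith [hsplit]
    -- bound on the remaining terms
    have hbound : ∀ n, |if n = m then (0:ℝ) else a n / lam n ^ L| ≤
        |a n / lam n ^ L₀| * (1 / lam (m + 1) ^ (L - L₀)) := by
      intro n
      rcases lt_trichotomy n m with hn | hn | hn
      · have hz : (if n = m then (0:ℝ) else a n / lam n ^ L) = 0 := by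
          rw [if_neg hn.ne, hlt n hn]; simp
        rw [hz, abs_zero]; positivity
      · rw [if_pos hn, abs_zero]; positivity
      · rw [if_neg hn.ne']
        have hln : 0 < lam n := hpos n
        have hge : lam (m + 1) ≤ lam n := hmono.monotone hn
        rw [abs_div, abs_div, abs_pow, abs_pow, abs_of_pos hln]
        have hpowsplit : lam n ^ L = lam n ^ L₀ * lam n ^ (L - L₀) := by
          rw [← pow_add]
          congr 1
          omega
        have hpowge : lam (m + 1) ^ (L - L₀) ≤ lam n ^ (L - L₀) :=
          pow_le_pow_left₀ hlam1.le hge _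
        rw [hpowsplit, div_mul_eq_div_div, div_eq_mul_one_div]
        gcongr
        all_goals first
          | exact one_div_le_one_div_of_le (by positivity) hpowge
          | positivity
    have hsummb : Summable fun n => |a n / lam n ^ L₀| * (1 / lam (m + 1) ^ (L - L₀)) :=
      (habs 0).mul_right _
    have hsummg : Summable fun n => |if n = m then (0:ℝ) else a n / lam n ^ L| := by
      apply Summable.of_nonneg_of_le (fun n => abs_nonneg _) hbound hsummb
    have habs_le : |a m / lam m ^ L| ≤ ∑' n, |if n = m then (0:ℝ) else a n / lam n ^ L| := by
      rw [hfm, abs_neg]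
      have := norm_tsum_le_tsum_norm
        (f := fun n => if n = m then (0:ℝ) else a n / lam n ^ L)
        (by simpa using hsummg)
      simpa using this
    have htsum_le : (∑' n, |if n = m then (0:ℝ) else a n / lam n ^ L|)
        ≤ S * (1 / lam (m + 1) ^ (L - L₀)) := by
      rw [hS, ← tsum_mul_right]
      exact Summable.tsum_le_tsum hbound hsummg hsummb
    have h1 : |a m| / lam m ^ L ≤ S * (1 / lam (m + 1) ^ (L - L₀)) := by
      calc |a m| / lam m ^ L = |a m / lam m ^ L| := by
            rw [abs_div, abs_pow, abs_of_pos (hpos m)]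
          _ ≤ _ := le_trans habs_le htsum_le
    have hlm : 0 < lam m := hpos m
    have h2 : |a m| ≤ S * (1 / lam (m + 1) ^ (L - L₀)) * lam m ^ L := by
      rw [div_le_iff₀ (by positivity)] at h1
      exact h1
    have heq : S * (1 / lam (m + 1) ^ (L - L₀)) * lam m ^ L
        = S * lam (m + 1) ^ L₀ * r ^ L := by
      have hsplit2 : lam (m + 1) ^ L = lam (m + 1) ^ L₀ * lam (m + 1) ^ (L - L₀) := by
        rw [← pow_add]; congr 1; omega
      rw [hr, div_pow]
      field_simp
      rw [hsplit2]
      ring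
    rw [heq] at h2
    exact h2
  -- conclude by taking limits
  have htend : Filter.Tendsto (fun k => S * lam (m + 1) ^ L₀ * r ^ ℓ k)
      Filter.atTop (nhds 0) := by
    have h1 : Filter.Tendsto (fun n : ℕ => r ^ n) Filter.atTop (nhds 0) :=
      tendsto_pow_atTop_nhds_zero_of_lt_one hr0 hr1
    have h2 := (h1.comp hℓ).const_mul (S * lam (m + 1) ^ L₀)
    simpa using h2
  have hev : ∀ᶠ k in Filter.atTop, |a m| ≤ S * lam (m + 1) ^ L₀ * r ^ ℓ k := by
    filter_upwards [hℓ.eventually_ge_atTop L₀] with k hk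
    exact key k hk
  have : |a m| ≤ 0 := ge_of_tendsto htend hev
  exact absurd this (not_le.mpr (abs_pos.mpr ham))
end

section
/- Let T > 0, σ > 0, μ ∈ L^∞(0,T), and let ℓ₀ ∈ ℕ ∪ {0} be such that ∫₀^T (−s)^m μ(s) ds = 0 for all integers m with 0 ≤ m ≤ ℓ₀ − 1 (no condition when ℓ₀ = 0). Set μ_{ℓ₀} := ∫₀^T (−s)^{ℓ₀} μ(s) ds. Then the function t ↦ ∫₀^T (t−s)^{−σ} μ(s) ds − C(−σ,ℓ₀) μ_{ℓ₀} t^{−σ−ℓ₀} is O(t^{−σ−ℓ₀−1}) as t → ∞. -/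
open MeasureTheory

/-- The generalized binomial coefficient
`C(x,ℓ) = x(x−1)⋯(x−ℓ+1)/ℓ!`, with `C(x,0) = 1`. -/
noncomputable def genBinom (x : ℝ) (ℓ : ℕ) : ℝ :=
  (∏ i ∈ Finset.range ℓ, (x - i)) / (Nat.factorial ℓ)

lemma iterDeriv_rpow (σ t T : ℝ) (hT : 0 < T) (ht : T < t) (m : ℕ) :
    ∀ s ∈ Set.Icc (0:ℝ) T,
      iteratedDerivWithin m (fun s => (t - s) ^ (-σ)) (Set.Icc 0 T) s
        = (∏ i ∈ Finset.range m, (σ + i)) * (t - s) ^ (-σ - m) := by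
  have hu : UniqueDiffOn ℝ (Set.Icc (0:ℝ) T) := uniqueDiffOn_Icc hT
  induction m with
  | zero => intro s hs; simp
  | succ m ih =>
    intro s hs
    have hpos : (0:ℝ) < t - s := by have := hs.2; linarith
    rw [iteratedDerivWithin_succ]
    rw [derivWithin_congr ih (ih s hs)]
    have hd : HasDerivAt (fun x : ℝ => (∏ i ∈ Finset.range m, (σ + i)) * (t - x) ^ (-σ - m))
        ((∏ i ∈ Finset.range m, (σ + i)) * ((-1) * (-σ - m) * (t - s) ^ (-σ - (m:ℝ) - 1))) s := by
      have h1 : HasDerivAt (fun x : ℝ => t - x) (-1) s := (hasDerivAt_id s).const_sub t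
      have h2 := h1.rpow_const (p := -σ - m) (Or.inl hpos.ne')
      exact h2.const_mul _
    rw [(hd.hasDerivWithinAt.derivWithin (hu s hs)), Finset.prod_range_succ]
    have he : -σ - ((m+1 : ℕ) : ℝ) = -σ - (m:ℝ) - 1 := by push_cast; ring
    rw [he]; ring

lemma genBinom_neg_eq (σ : ℝ) (m : ℕ) (s : ℝ) :
    genBinom (-σ) m * (-s) ^ m = (∏ i ∈ Finset.range m, (σ + i)) * s ^ m / m.factorial := by
  unfold genBinom
  have h : ∏ i ∈ Finset.range m, (-σ - (i:ℝ)) = (-1)^m * ∏ i ∈ Finset.range m, (σ + (i:ℝ)) := by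
    calc ∏ i ∈ Finset.range m, (-σ - (i:ℝ)) = ∏ i ∈ Finset.range m, (-1) * (σ + (i:ℝ)) :=
          Finset.prod_congr rfl (fun i _ => by ring)
      _ = (-1)^m * ∏ i ∈ Finset.range m, (σ + (i:ℝ)) := by
          rw [Finset.prod_mul_distrib, Finset.prod_const, Finset.card_range]
  rw [h, neg_pow s m]
  field_simp
  have h1 : ((-1:ℝ))^m * (-1:ℝ)^m = 1 := by rw [← pow_add]; exact Even.neg_one_pow ⟨m, rfl⟩
  linear_combination (∏ i ∈ Finset.range m, (σ + (i:ℝ))) * s^m * h1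

lemma taylor_key (σ T : ℝ) (hσ : 0 < σ) (hT : 0 < T) (n : ℕ) :
    ∃ D : ℝ, 0 ≤ D ∧ ∀ t : ℝ, 2*T ≤ t → ∀ s ∈ Set.Icc (0:ℝ) T,
      |(t - s) ^ (-σ) - ∑ m ∈ Finset.range (n+1), genBinom (-σ) m * (-s) ^ m * t ^ (-σ - (m:ℝ))|
        ≤ D * t ^ (-σ - (n:ℝ) - 1) := by
  set P : ℝ := ∏ i ∈ Finset.range (n+1), (σ + (i:ℝ)) with hP
  have hPpos : 0 < P := Finset.prod_pos fun i _ => by positivity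
  refine ⟨P * 2 ^ (σ + (n:ℝ) + 1) * T ^ (n+1) / n.factorial, by positivity, ?_⟩
  intro t ht s hs
  have htT : T < t := by linarith
  have htpos : 0 < t := by linarith
  have hu : UniqueDiffOn ℝ (Set.Icc (0:ℝ) T) := uniqueDiffOn_Icc hT
  have h0mem : (0:ℝ) ∈ Set.Icc (0:ℝ) T := ⟨le_refl 0, hT.le⟩
  have hcd : ContDiffOn ℝ (n+1) (fun s => (t - s) ^ (-σ)) (Set.Icc (0:ℝ) T) := by
    intro x hx
    have hpos : (0:ℝ) < t - x := by have := hx.2; linarith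
    have h1 : ContDiffAt ℝ (n+1) (fun y : ℝ => y ^ (-σ)) (t - x) :=
      Real.contDiffAt_rpow_const_of_ne hpos.ne'
    have h2 : ContDiffAt ℝ (n+1) (fun y : ℝ => t - y) x :=
      (contDiff_const.sub contDiff_id).contDiffAt
    exact (h1.comp x h2).contDiffWithinAt
  have hbound : ∀ y ∈ Set.Icc (0:ℝ) T,
      ‖iteratedDerivWithin (n+1) (fun s => (t - s) ^ (-σ)) (Set.Icc 0 T) y‖
        ≤ P * (t - T) ^ (-σ - ((n:ℝ)+1)) := by
    intro y hy
    rw [iterDeriv_rpow σ t T hT htT (n+1) y hy]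
    have hpos : (0:ℝ) < t - y := by have := hy.2; linarith
    have h1 : (t - y) ^ (-σ - ((n+1:ℕ):ℝ)) ≤ (t - T) ^ (-σ - ((n:ℝ)+1)) := by
      have : (-σ - ((n+1:ℕ):ℝ)) = -σ - ((n:ℝ)+1) := by push_cast; ring
      rw [this]
      exact Real.rpow_le_rpow_of_nonpos (by linarith) (by have := hy.2; linarith) (by linarith)
    rw [Real.norm_eq_abs, abs_of_nonneg (by positivity)]
    exact mul_le_mul_of_nonneg_left h1 hPpos.le
  have htaylor := taylor_mean_remainder_bound (n := n) hT.le hcd hs hbound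
  have hpoly : taylorWithinEval (fun s => (t - s) ^ (-σ)) n (Set.Icc 0 T) 0 s
      = ∑ m ∈ Finset.range (n+1), genBinom (-σ) m * (-s) ^ m * t ^ (-σ - (m:ℝ)) := by
    rw [taylor_within_apply]
    refine Finset.sum_congr rfl fun m hm => ?_
    rw [iterDeriv_rpow σ t T hT htT m 0 h0mem]
    rw [smul_eq_mul, genBinom_neg_eq]
    rw [sub_zero]
    field_simp
    ring
  rw [hpoly] at htaylor
  rw [Real.norm_eq_abs, sub_zero] at htaylor
  refine htaylor.trans ?_
  have hs1 : s ^ (n+1) ≤ T ^ (n+1) := pow_le_pow_left₀ hs.1 hs.2 _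
  have h2 : (t - T) ^ (-σ - ((n:ℝ)+1)) ≤ 2 ^ (σ + (n:ℝ) + 1) * t ^ (-σ - (n:ℝ) - 1) := by
    have hhalf : t/2 ≤ t - T := by linarith
    have ha : (t - T) ^ (-σ - ((n:ℝ)+1)) ≤ (t/2) ^ (-σ - ((n:ℝ)+1)) :=
      Real.rpow_le_rpow_of_nonpos (by positivity) hhalf (by linarith)
    refine ha.trans_eq ?_
    rw [Real.div_rpow htpos.le (by norm_num), div_eq_mul_inv, ← Real.rpow_neg (by norm_num)]
    have : -(-σ - ((n:ℝ)+1)) = σ + (n:ℝ) + 1 := by ring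
    rw [this]
    have : (-σ - ((n:ℝ)+1)) = -σ - (n:ℝ) - 1 := by ring
    rw [this]; ring
  have hnn : (0:ℝ) ≤ (t - T) ^ (-σ - ((n:ℝ)+1)) := Real.rpow_nonneg (by linarith) _
  calc P * (t - T) ^ (-σ - ((n:ℝ)+1)) * s ^ (n+1) / n.factorial
      ≤ P * (2 ^ (σ + (n:ℝ) + 1) * t ^ (-σ - (n:ℝ) - 1)) * T ^ (n+1) / n.factorial := by
        have hsn : (0:ℝ) ≤ s ^ (n+1) := pow_nonneg hs.1 _
        gcongr
    _ = P * 2 ^ (σ + (n:ℝ) + 1) * T ^ (n+1) / n.factorial * t ^ (-σ - (n:ℝ) - 1) := by ring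

/-- Formula (3.4): if the moments of `μ` of order `< ℓ₀` vanish, then
`∫₀^T (t−s)^{−σ} μ(s) ds = C(−σ,ℓ₀) μ_{ℓ₀} t^{−σ−ℓ₀} + O(t^{−σ−ℓ₀−1})` as `t → ∞`. -/
theorem integral_asymptotics (T σ : ℝ) (hT : 0 < T) (hσ : 0 < σ)
    (μ : ℝ → ℝ) (hμ : MemLp μ ⊤ (volume.restrict (Set.Ioo (0:ℝ) T)))
    (ℓ₀ : ℕ) (hmom : ∀ m < ℓ₀, (∫ s in Set.Ioo (0:ℝ) T, (-s) ^ m * μ s) = 0) :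
    ∃ C > 0, ∃ t₀ : ℝ, ∀ t ≥ t₀,
      |(∫ s in Set.Ioo (0:ℝ) T, (t - s) ^ (-σ) * μ s) -
          genBinom (-σ) ℓ₀ * (∫ s in Set.Ioo (0:ℝ) T, (-s) ^ ℓ₀ * μ s) *
            t ^ (-σ - (ℓ₀ : ℝ))|
        ≤ C * t ^ (-σ - (ℓ₀ : ℝ) - 1) := by
  haveI : Fact (volume (Set.Ioo (0:ℝ) T) < ⊤) := ⟨measure_Ioo_lt_top⟩
  set ν := volume.restrict (Set.Ioo (0:ℝ) T) with hνdef
  have hInt : Integrable μ ν := hμ.integrable le_top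
  have hmeasμ : AEStronglyMeasurable μ ν := hμ.1
  set M := (eLpNormEssSup μ ν).toReal with hM
  have hMnn : 0 ≤ M := ENNReal.toReal_nonneg
  have hMfin : eLpNormEssSup μ ν < ⊤ := by
    have := hμ.2; rwa [eLpNorm_exponent_top] at this
  have hμbd : ∀ᵐ s ∂ν, |μ s| ≤ M := by
    filter_upwards [ae_le_eLpNormEssSup (f := μ) (μ := ν)] with s hsb
    have h2 := ENNReal.toReal_mono hMfin.ne hsb
    simpa [Real.norm_eq_abs] using h2
  obtain ⟨D, hD, hkey⟩ := taylor_key σ T hσ hT ℓ₀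
  refine ⟨D * M * T + 1, by positivity, 2*T, ?_⟩
  intro t ht
  have htT : T < t := by linarith
  have htpos : 0 < t := by linarith
  have hmemae : ∀ᵐ s ∂ν, s ∈ Set.Ioo (0:ℝ) T := ae_restrict_mem measurableSet_Ioo
  have hint_m : ∀ m : ℕ, Integrable (fun s => (-s)^m * μ s) ν := by
    intro m
    refine hInt.bdd_mul (c := T^m)
      ((continuous_neg.pow m).aestronglyMeasurable) ?_
    filter_upwards [hmemae] with s hsm
    rw [Real.norm_eq_abs, abs_pow, abs_neg, abs_of_nonneg hsm.1.le]
    exact pow_le_pow_left₀ hsm.1.le hsm.2.le m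
  have hint_main : Integrable (fun s => (t - s) ^ (-σ) * μ s) ν := by
    have hmg : Measurable fun s : ℝ => (t - s) ^ (-σ) := by
      have h : Measurable fun s : ℝ => t - s := measurable_const.sub measurable_id
      measurability
    refine hInt.bdd_mul (c := T^(-σ)) hmg.aestronglyMeasurable ?_
    filter_upwards [hmemae] with s hsm
    have hpos : (0:ℝ) < t - s := by have := hsm.2; linarith
    rw [Real.norm_eq_abs, abs_of_nonneg (Real.rpow_nonneg hpos.le _)]
    exact Real.rpow_le_rpow_of_nonpos hT (by have := hsm.2; linarith) (by linarith)
  have hint_sum : Integrable (fun s => ∑ m ∈ Finset.range (ℓ₀+1),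
      genBinom (-σ) m * t^(-σ-(m:ℝ)) * ((-s)^m * μ s)) ν :=
    integrable_finset_sum _ fun m _ => (hint_m m).const_mul _
  have hsum_eval : (∫ s in Set.Ioo (0:ℝ) T, ∑ m ∈ Finset.range (ℓ₀+1),
        genBinom (-σ) m * t^(-σ-(m:ℝ)) * ((-s)^m * μ s))
      = genBinom (-σ) ℓ₀ * (∫ s in Set.Ioo (0:ℝ) T, (-s)^ℓ₀ * μ s) * t^(-σ-(ℓ₀:ℝ)) := by
    rw [integral_finset_sum _ (fun m _ => (hint_m m).const_mul _)]
    have hc : ∀ m ∈ Finset.range (ℓ₀+1),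
        (∫ s in Set.Ioo (0:ℝ) T, genBinom (-σ) m * t^(-σ-(m:ℝ)) * ((-s)^m * μ s))
          = genBinom (-σ) m * t^(-σ-(m:ℝ)) * ∫ s in Set.Ioo (0:ℝ) T, (-s)^m * μ s :=
      fun m _ => integral_const_mul _ _
    rw [Finset.sum_congr rfl hc, Finset.sum_eq_single ℓ₀]
    · ring
    · intro m hm hne
      have hlt : m < ℓ₀ := lt_of_le_of_ne (Nat.lt_succ_iff.mp (Finset.mem_range.mp hm)) hne
      rw [hmom m hlt, mul_zero]
    · intro h; exact absurd (Finset.self_mem_range_succ ℓ₀) h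
  have hdiff : (∫ s in Set.Ioo (0:ℝ) T, (t - s) ^ (-σ) * μ s) -
        genBinom (-σ) ℓ₀ * (∫ s in Set.Ioo (0:ℝ) T, (-s)^ℓ₀ * μ s) * t^(-σ-(ℓ₀:ℝ))
      = ∫ s in Set.Ioo (0:ℝ) T, ((t - s) ^ (-σ)
          - ∑ m ∈ Finset.range (ℓ₀+1), genBinom (-σ) m * (-s)^m * t^(-σ-(m:ℝ))) * μ s := by
    rw [← hsum_eval, ← integral_sub hint_main hint_sum]
    refine integral_congr_ae (Filter.Eventually.of_forall fun s => ?_)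
    simp only [sub_mul, Finset.sum_mul]
    congr 1
    exact Finset.sum_congr rfl fun m _ => by ring
  rw [hdiff]
  have hb : ∀ᵐ s ∂ν, ‖((t - s) ^ (-σ)
      - ∑ m ∈ Finset.range (ℓ₀+1), genBinom (-σ) m * (-s)^m * t^(-σ-(m:ℝ))) * μ s‖
        ≤ (D * t^(-σ-(ℓ₀:ℝ)-1)) * M := by
    filter_upwards [hmemae, hμbd] with s hsm hsb
    rw [norm_mul, Real.norm_eq_abs, Real.norm_eq_abs]
    exact mul_le_mul (hkey t ht s ⟨hsm.1.le, hsm.2.le⟩) hsb (abs_nonneg _)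
      (by positivity)
  have hint := norm_integral_le_of_norm_le_const hb
  rw [Real.norm_eq_abs] at hint
  have hmeas : (ν Set.univ).toReal = T := by
    rw [hνdef, Measure.restrict_apply_univ, Real.volume_Ioo]
    simp [hT.le]
  rw [measureReal_def, hmeas] at hint
  refine hint.trans ?_
  have hte : 0 ≤ t^(-σ-(ℓ₀:ℝ)-1) := Real.rpow_nonneg htpos.le _
  nlinarith [hte]
end

section
/- Let λ ∈ ℝ, λ ≠ 0, let a, f ∈ ℝ, and let 0 < T < T₁ < T₂. Suppose u : [0,∞) → ℝ is continuous, differentiable on (0,T) ∪ (T,∞), satisfies u(0) = a, u′(t) = −λ u(t) + f for t ∈ (0,T), and u′(t) = −λ u(t) for t > T. Then u(t) = 0 for all t ∈ (T₁,T₂) if and only if aλ + (e^{λT} − 1) f = 0. -/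
open Set Filter Topology

/-- If `g` is continuous on `[a,b]` and has zero derivative on `(a,b)`, then `g b = g a`. -/
lemma const_of_deriv_zero (g : ℝ → ℝ) (a b : ℝ) (hab : a < b)
    (hc : ContinuousOn g (Set.Icc a b))
    (hd : ∀ x ∈ Set.Ioo a b, HasDerivAt g 0 x) : g b = g a := by
  have key : ∀ s ∈ Set.Ioo a b, g b = g s := by
    intro s hs
    have h1 : ContinuousOn g (Set.Icc s b) :=
      hc.mono (Set.Icc_subset_Icc hs.1.le le_rfl)
    have h2 : ∀ x ∈ Set.Ico s b, HasDerivWithinAt g 0 (Set.Ici x) x := fun x hx =>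
      (hd x ⟨lt_of_lt_of_le hs.1 hx.1, hx.2⟩).hasDerivWithinAt
    exact constant_of_has_deriv_right_zero h1 h2 b ⟨hs.2.le, le_rfl⟩
  have hne : (𝓝[Set.Ioo a b] a).NeBot := left_nhdsWithin_Ioo_neBot hab
  have h1 : Filter.Tendsto g (𝓝[Set.Ioo a b] a) (𝓝 (g a)) :=
    (hc a (Set.left_mem_Icc.2 hab.le)).mono Set.Ioo_subset_Icc_self
  have h2 : Filter.Tendsto g (𝓝[Set.Ioo a b] a) (𝓝 (g b)) := by
    refine tendsto_const_nhds.congr' ?_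
    filter_upwards [self_mem_nhdsWithin] with x hx
    exact key x hx
  exact tendsto_nhds_unique h2 h1

/-- Example (i) of the paper (`α = 1`): for `u' = −λu + χ_{(0,T)} f`, `u(0) = a`,
one has `u ≡ 0` on `(T₁,T₂)` iff `aλ + (e^{λT} − 1) f = 0`, so simultaneous
uniqueness of `a` and `f` fails. -/
theorem first_order_example (lam : ℝ) (hlam : lam ≠ 0) (a f T T₁ T₂ : ℝ)
    (hT : 0 < T) (hTT₁ : T < T₁) (hT₁T₂ : T₁ < T₂)
    (u : ℝ → ℝ) (hcont : ContinuousOn u (Set.Ici 0)) (hu0 : u 0 = a)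
    (hode1 : ∀ t ∈ Set.Ioo (0:ℝ) T, HasDerivAt u (-lam * u t + f) t)
    (hode2 : ∀ t ∈ Set.Ioi T, HasDerivAt u (-lam * u t) t) :
    (∀ t ∈ Set.Ioo T₁ T₂, u t = 0) ↔
      a * lam + (Real.exp (lam * T) - 1) * f = 0 := by
  set v : ℝ → ℝ := fun x => Real.exp (lam * x) * u x with hv
  have hexp : ∀ x : ℝ, HasDerivAt (fun y => Real.exp (lam * y))
      (Real.exp (lam * x) * lam) x := by
    intro x
    have := ((hasDerivAt_id x).const_mul lam).exp
    simpa using this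
  have hvcont : ContinuousOn v (Set.Ici 0) :=
    (Real.continuous_exp.comp (continuous_const.mul continuous_id)).continuousOn.mul hcont
  -- step 1: value at T
  have hwT : Real.exp (lam * T) * u T * lam = a * lam + (Real.exp (lam * T) - 1) * f := by
    set w : ℝ → ℝ := fun x => Real.exp (lam * x) * u x - (f / lam) * Real.exp (lam * x) with hw
    have hwc : ContinuousOn w (Set.Icc 0 T) := by
      apply ContinuousOn.sub
      · exact hvcont.mono (fun x hx => hx.1)
      · exact (continuous_const.mul (Real.continuous_exp.comp
          (continuous_const.mul continuous_id))).continuousOn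
    have hwd : ∀ x ∈ Set.Ioo (0:ℝ) T, HasDerivAt w 0 x := by
      intro x hx
      have h1 := ((hexp x).fun_mul (hode1 x hx)).sub ((hexp x).const_mul (f / lam))
      refine h1.congr_deriv ?_
      field_simp
      ring
    have := const_of_deriv_zero w 0 T hT hwc hwd
    simp only [hw, mul_zero, Real.exp_zero, one_mul, hu0] at this
    have h := this
    field_simp at h ⊢
    nlinarith [h]
  -- step 2: v constant past T
  have hvc : ∀ t, T < t → Real.exp (lam * t) * u t = Real.exp (lam * T) * u T := by
    intro t ht
    have hvd : ∀ x ∈ Set.Ioo T t, HasDerivAt v 0 x := by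
      intro x hx
      have h1 := (hexp x).fun_mul (hode2 x hx.1)
      refine h1.congr_deriv ?_
      ring
    exact const_of_deriv_zero v T t ht
      (hvcont.mono (fun x hx => le_trans hT.le hx.1)) hvd
  constructor
  · intro h
    have ht0 : T < (T₁ + T₂) / 2 := by linarith
    have h1 := hvc ((T₁ + T₂) / 2) ht0
    rw [h ((T₁ + T₂) / 2) ⟨by linarith, by linarith⟩, mul_zero] at h1
    have h2 : Real.exp (lam * T) * u T * lam = 0 := by rw [← h1]; ring
    linarith [hwT, h2]
  · intro h t ht
    have h1 := hvc t (lt_trans hTT₁ ht.1)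
    have h2 : Real.exp (lam * T) * u T * lam = 0 := by rw [hwT, h]
    have h3 : Real.exp (lam * T) * u T = 0 := by
      rcases mul_eq_zero.1 h2 with h' | h'
      · exact h'
      · exact absurd h' hlam
    rw [h3] at h1
    have := Real.exp_pos (lam * t)
    have : u t = 0 := by
      have := mul_eq_zero.1 h1
      rcases this with h' | h'
      · exact absurd h' (Real.exp_pos (lam * t)).ne'
      · exact h'
    exact this
end

section
/- Let r > 0, let a, b, f ∈ ℝ, and let 0 < T < T₁ < T₂. Suppose u : [0,∞) → ℝ is continuously differentiable, twice differentiable on (0,T) ∪ (T,∞), satisfies u(0) = a, u′(0) = b, u″(t) = −r² u(t) + f for t ∈ (0,T), and u″(t) = −r² u(t) for t > T. Then u(t) = 0 for all t ∈ (T₁,T₂) if and only if a + (cos(rT) − 1) f / r² = 0 and b/r + sin(rT) f / r² = 0. -/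
lemma constant_aux {g : ℝ → ℝ} {a b : ℝ} (hab : a < b)
    (hc : ContinuousOn g (Set.Icc a b))
    (hd : ∀ x ∈ Set.Ioo a b, HasDerivAt g 0 x) : g b = g a := by
  obtain ⟨c, -, hc0⟩ := exists_hasDerivAt_eq_slope g (fun _ => 0) hab hc hd
  have hba : b - a ≠ 0 := by linarith
  have := hc0.symm
  rw [div_eq_zero_iff] at this
  rcases this with h | h
  · linarith
  · exact absurd h hba

/-- Example (ii) of the paper (`α = 2`): for `u'' = −r²u + χ_{(0,T)} f`,
`u(0) = a`, `u'(0) = b`, one has `u ≡ 0` on `(T₁,T₂)` iff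
`a + (cos rT − 1)f/r² = 0` and `b/r + (sin rT) f/r² = 0`. -/
theorem second_order_example (r : ℝ) (hr : 0 < r) (a b f T T₁ T₂ : ℝ)
    (hT : 0 < T) (hTT₁ : T < T₁) (hT₁T₂ : T₁ < T₂)
    (u u' : ℝ → ℝ)
    (hderiv : ∀ t ∈ Set.Ici (0:ℝ), HasDerivWithinAt u (u' t) (Set.Ici 0) t)
    (hcont : ContinuousOn u' (Set.Ici 0))
    (hu0 : u 0 = a) (hu'0 : u' 0 = b)
    (hode1 : ∀ t ∈ Set.Ioo (0:ℝ) T, HasDerivAt u' (-r ^ 2 * u t + f) t)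
    (hode2 : ∀ t ∈ Set.Ioi T, HasDerivAt u' (-r ^ 2 * u t) t) :
    (∀ t ∈ Set.Ioo T₁ T₂, u t = 0) ↔
      (a + (Real.cos (r * T) - 1) * f / r ^ 2 = 0 ∧
       b / r + Real.sin (r * T) * f / r ^ 2 = 0) := by
  have hrne : r ≠ 0 := ne_of_gt hr
  set A := a + (Real.cos (r * T) - 1) * f / r ^ 2 with hA
  set B := b / r + Real.sin (r * T) * f / r ^ 2 with hB
  have hu : ∀ t : ℝ, 0 < t → HasDerivAt u (u' t) t := fun t ht =>
    (hderiv t ht.le).hasDerivAt (Ici_mem_nhds ht)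
  have hrt : ∀ t : ℝ, HasDerivAt (fun s => r * s) r t := fun t => by
    simpa using (hasDerivAt_id t).const_mul r
  have hcos : ∀ t : ℝ, HasDerivAt (fun s => Real.cos (r * s)) (-Real.sin (r*t) * r) t :=
    fun t => (hrt t).cos
  have hsin : ∀ t : ℝ, HasDerivAt (fun s => Real.sin (r * s)) (Real.cos (r*t) * r) t :=
    fun t => (hrt t).sin
  set C : ℝ → ℝ := fun t => u t * Real.cos (r*t) - u' t * Real.sin (r*t) / r with hCdef
  set S : ℝ → ℝ := fun t => u t * Real.sin (r*t) + u' t * Real.cos (r*t) / r with hSdef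
  have huS : ∀ t, u t = C t * Real.cos (r*t) + S t * Real.sin (r*t) := by
    intro t
    simp only [hCdef, hSdef]
    have h := Real.sin_sq_add_cos_sq (r*t)
    field_simp
    linear_combination (-(u t * r)) * h
  have hu_cont : ContinuousOn u (Set.Ici 0) := fun t ht => (hderiv t ht).continuousWithinAt
  have hcos_cont : Continuous fun t : ℝ => Real.cos (r*t) :=
    Real.continuous_cos.comp (continuous_const.mul continuous_id)
  have hsin_cont : Continuous fun t : ℝ => Real.sin (r*t) :=
    Real.continuous_sin.comp (continuous_const.mul continuous_id)
  have hC_cont : ContinuousOn C (Set.Ici 0) :=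
    (hu_cont.mul hcos_cont.continuousOn).sub ((hcont.mul hsin_cont.continuousOn).div_const r)
  have hS_cont : ContinuousOn S (Set.Ici 0) :=
    (hu_cont.mul hsin_cont.continuousOn).add ((hcont.mul hcos_cont.continuousOn).div_const r)
  -- C, S constant on (T, ∞)
  have hC'2 : ∀ x ∈ Set.Ioi T, HasDerivAt C 0 x := by
    intro x hx
    have h1 := ((hu x (hT.trans hx)).mul (hcos x)).sub (((hode2 x hx).mul (hsin x)).div_const r)
    refine h1.congr_deriv ?_
    field_simp
    ring
  have hS'2 : ∀ x ∈ Set.Ioi T, HasDerivAt S 0 x := by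
    intro x hx
    have h1 := ((hu x (hT.trans hx)).mul (hsin x)).add (((hode2 x hx).mul (hcos x)).div_const r)
    refine h1.congr_deriv ?_
    field_simp
    ring
  have hCt : ∀ t : ℝ, T < t → C t = C T := by
    intro t ht
    refine constant_aux ht (hC_cont.mono ?_) (fun x hx => hC'2 x hx.1)
    intro x hx
    exact le_trans hT.le hx.1
  have hSt : ∀ t : ℝ, T < t → S t = S T := by
    intro t ht
    refine constant_aux ht (hS_cont.mono ?_) (fun x hx => hS'2 x hx.1)
    intro x hx
    exact le_trans hT.le hx.1
  -- modified C, S constant on (0, T)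
  have hCT : C T = A := by
    have hconst : C T - f * Real.cos (r*T) / r^2 = C 0 - f * Real.cos (r*0) / r^2 := by
      refine constant_aux (g := fun s => C s - f * Real.cos (r*s) / r^2) hT
        ((hC_cont.mono (fun x hx => hx.1)).sub
          ((((continuous_const.mul hcos_cont).continuousOn).div_const (r^2)).mono (fun x _ => trivial))) ?_
      intro x hx
      have h1 := ((hu x hx.1).mul (hcos x)).sub (((hode1 x hx).mul (hsin x)).div_const r)
      have h2 := ((hcos x).const_mul f).div_const (r^2)
      have h3 := h1.sub h2
      refine h3.congr_deriv ?_
      field_simp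
      ring
    have hC0 : C 0 = a := by simp [hCdef, hu0]
    rw [hA]
    rw [hC0] at hconst
    have : Real.cos (r*0) = 1 := by simp
    rw [this] at hconst
    field_simp at hconst ⊢
    linarith
  have hST : S T = B := by
    have hconst : S T - f * Real.sin (r*T) / r^2 = S 0 - f * Real.sin (r*0) / r^2 := by
      refine constant_aux (g := fun s => S s - f * Real.sin (r*s) / r^2) hT ?_ ?_
      · exact ((hS_cont.mono (fun x hx => hx.1)).sub
          ((((continuous_const.mul hsin_cont).continuousOn).div_const (r^2)).mono (fun x _ => trivial)))
      intro x hx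
      have h1 := ((hu x hx.1).mul (hsin x)).add (((hode1 x hx).mul (hcos x)).div_const r)
      have h2 := ((hsin x).const_mul f).div_const (r^2)
      have h3 := h1.sub h2
      refine h3.congr_deriv ?_
      field_simp
      ring
    have hS0 : S 0 = b / r := by simp [hSdef, hu'0]
    rw [hB]
    rw [hS0] at hconst
    have : Real.sin (r*0) = 0 := by simp
    rw [this] at hconst
    field_simp at hconst ⊢
    linarith
  have huval : ∀ t ∈ Set.Ioo T₁ T₂, u t = A * Real.cos (r*t) + B * Real.sin (r*t) := by
    intro t ht
    have hTt : T < t := hTT₁.trans ht.1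
    rw [huS t, hCt t hTt, hSt t hTt, hCT, hST]
  constructor
  · intro h
    have hπ := Real.pi_pos
    set ε := min ((T₂ - T₁)/2) (Real.pi/(2*r)) with hε
    have hεpos : 0 < ε := lt_min (by linarith) (by positivity)
    have hεle1 : ε ≤ (T₂ - T₁)/2 := min_le_left _ _
    have hεle2 : ε ≤ Real.pi/(2*r) := min_le_right _ _
    set t₀ := T₁ + ε/2 with ht₀
    set t₁ := T₁ + ε with ht₁
    have ht₀mem : t₀ ∈ Set.Ioo T₁ T₂ := ⟨by simp [ht₀]; linarith, by simp [ht₀]; linarith⟩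
    have ht₁mem : t₁ ∈ Set.Ioo T₁ T₂ := ⟨by simp [ht₁]; linarith, by simp [ht₁]; linarith⟩
    have e0 : A * Real.cos (r*t₀) + B * Real.sin (r*t₀) = 0 := by
      rw [← huval t₀ ht₀mem]; exact h t₀ ht₀mem
    have e1 : A * Real.cos (r*t₁) + B * Real.sin (r*t₁) = 0 := by
      rw [← huval t₁ ht₁mem]; exact h t₁ ht₁mem
    have hsub : r*t₁ - r*t₀ = r*ε/2 := by rw [ht₀, ht₁]; ring
    have hspos : 0 < Real.sin (r*t₁ - r*t₀) := by
      rw [hsub]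
      apply Real.sin_pos_of_pos_of_lt_pi
      · positivity
      · have : r * ε ≤ Real.pi/2 := by
          calc r * ε ≤ r * (Real.pi/(2*r)) := by
                exact mul_le_mul_of_nonneg_left hεle2 hr.le
            _ = Real.pi/2 := by field_simp
        linarith
    have hA0 : A * Real.sin (r*t₁ - r*t₀) = 0 := by
      linear_combination Real.sin (r*t₁) * e0 - Real.sin (r*t₀) * e1 + A * Real.sin_sub (r*t₁) (r*t₀)
    have hB0 : B * Real.sin (r*t₁ - r*t₀) = 0 := by
      linear_combination Real.cos (r*t₀) * e1 - Real.cos (r*t₁) * e0 + B * Real.sin_sub (r*t₁) (r*t₀)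
    constructor
    · rcases mul_eq_zero.mp hA0 with h' | h'
      · exact h'
      · exact absurd h' (ne_of_gt hspos)
    · rcases mul_eq_zero.mp hB0 with h' | h'
      · exact h'
      · exact absurd h' (ne_of_gt hspos)
  · rintro ⟨hA0, hB0⟩ t ht
    rw [huval t ht, hA0, hB0]
    ring
end

section
/- Let α ∈ (0,1) ∪ (1,2), λ > 0, T > 0, a, b ∈ ℝ, and μ ∈ L^∞(0,T). Then the function u(t) := a E_{α,1}(−λ t^{α}) + b t E_{α,2}(−λ t^{α}) + ∫₀^T (t−s)^{α−1} E_{α,α}(−λ (t−s)^{α}) μ(s) ds is real-analytic on the interval (T, ∞). -/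
open MeasureTheory

/-- The (real) Mittag-Leffler function `E_{β,γ}(x) = Σ_k x^k / Γ(βk + γ)`. -/
noncomputable def mittagLeffler (β γ x : ℝ) : ℝ :=
  ∑' k : ℕ, x ^ k / Real.Gamma (β * k + γ)

open Filter Complex Set MeasureTheory FormalMultilinearSeries Metric
open scoped Topology NNReal ENNReal

namespace MLaux

noncomputable def mlc (β γ : ℝ) (k : ℕ) : ℂ := ((Real.Gamma (β * k + γ) : ℝ) : ℂ)⁻¹

variable {β γ : ℝ}



lemma gamma_pos (hβ : 0 < β) (hγ : 0 < γ) (k : ℕ) : 0 < Real.Gamma (β * k + γ) :=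
  Real.Gamma_pos_of_pos (by positivity)

lemma gamma_ratio_le (hβ0 : 0 < β) (hβ1 : β < 1) {x : ℝ} (hx : 0 < x) :
    Real.Gamma x / Real.Gamma (x + β) ≤ (x + β) ^ (1 - β) / x := by
  have hxβ : 0 < x + β := by linarith
  have hΓx : 0 < Real.Gamma x := Real.Gamma_pos_of_pos hx
  have hΓxβ : 0 < Real.Gamma (x + β) := Real.Gamma_pos_of_pos hxβ
  have key : x * Real.Gamma x ≤ Real.Gamma (x + β) * (x + β) ^ (1 - β) := by
    have h := Real.Gamma_mul_add_mul_le_rpow_Gamma_mul_rpow_Gamma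
      (s := x + β) (t := x + β + 1) (a := β) (b := 1 - β) hxβ (by linarith) hβ0
      (by linarith) (by ring)
    have harg : β * (x + β) + (1 - β) * (x + β + 1) = x + 1 := by ring
    rw [harg, Real.Gamma_add_one hx.ne', Real.Gamma_add_one hxβ.ne'] at h
    calc x * Real.Gamma x ≤ Real.Gamma (x + β) ^ β * ((x + β) * Real.Gamma (x + β)) ^ (1 - β) := h
      _ = Real.Gamma (x + β) * (x + β) ^ (1 - β) := by
          rw [Real.mul_rpow hxβ.le hΓxβ.le, mul_left_comm, ← Real.rpow_add hΓxβ,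
            show β + (1 - β) = 1 by ring, Real.rpow_one, mul_comm]
  rw [div_le_div_iff₀ hΓxβ hx]
  nlinarith [Real.rpow_nonneg hxβ.le (1 - β), hΓx, hΓxβ]

lemma tendsto_arg_atTop (hβ : 0 < β) (γ : ℝ) :
    Tendsto (fun k : ℕ => β * k + γ) atTop atTop :=
  tendsto_atTop_add_const_right _ _ ((tendsto_natCast_atTop_atTop).const_mul_atTop hβ)

lemma tendsto_ratio (hβ : β ∈ Set.Ioo (0:ℝ) 1 ∪ Set.Ioo (1:ℝ) 2) (hγ : 0 < γ) :
    Tendsto (fun k : ℕ => Real.Gamma (β * k + γ) / Real.Gamma (β * (k+1) + γ))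
      atTop (𝓝 0) := by
  have hβ0 : 0 < β := by rcases hβ with h | h <;> [exact h.1; linarith [h.1]]
  have hx := tendsto_arg_atTop hβ0 γ
  have hxpos : ∀ k : ℕ, 0 < β * k + γ := fun k => by positivity
  rcases hβ with hβ1 | hβ2
  · -- β ∈ (0,1)
    apply squeeze_zero' (g := fun k : ℕ => 2 ^ (1 - β) * (β * k + γ) ^ (-β))
    · exact Eventually.of_forall fun k =>
        div_nonneg (Real.Gamma_pos_of_pos (hxpos k)).le (Real.Gamma_pos_of_pos (by positivity)).le
    · filter_upwards [hx.eventually_ge_atTop β] with k hk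
      set x := β * k + γ with hxdef
      have hx0 : 0 < x := hxpos k
      have h1 : β * ((k:ℝ)+1) + γ = x + β := by ring
      rw [h1]
      refine (gamma_ratio_le hβ1.1 hβ1.2 hx0).trans ?_
      have h2 : (x + β) ^ (1 - β) ≤ (2*x) ^ (1 - β) :=
        Real.rpow_le_rpow (by linarith) (by linarith) (by linarith [hβ1.2])
      have h3 : (2*x) ^ (1-β) = 2 ^ (1-β) * x ^ (1-β) :=
        Real.mul_rpow (by norm_num) hx0.le
      have h4 : x ^ (1 - β) / x = x ^ (-β) := by
        rw [show (1:ℝ)-β = -β+1 by ring, Real.rpow_add_one hx0.ne', mul_div_assoc,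
          div_self hx0.ne', mul_one]
      calc (x + β) ^ (1-β) / x ≤ (2*x)^(1-β)/x := by
            gcongr
        _ = 2^(1-β) * (x ^ (1-β)/x) := by rw [h3]; ring
        _ = 2^(1-β) * x^(-β) := by rw [h4]
    · have := (tendsto_rpow_neg_atTop hβ0).comp hx
      simpa using this.const_mul (2 ^ (1-β))
  · -- β ∈ (1,2)
    apply squeeze_zero' (g := fun k : ℕ => (β * k + γ)⁻¹)
    · exact Eventually.of_forall fun k =>
        div_nonneg (Real.Gamma_pos_of_pos (hxpos k)).le (Real.Gamma_pos_of_pos (by positivity)).le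
    · filter_upwards [hx.eventually_ge_atTop 1] with k hk
      set x := β * k + γ with hxdef
      have hx0 : 0 < x := hxpos k
      have h1 : β * ((k:ℝ)+1) + γ = x + β := by ring
      rw [h1]
      have hmono : Real.Gamma (x + 1) ≤ Real.Gamma (x + β) := by
        rcases eq_or_lt_of_le hβ2.1.le with h | h
        · simp [← h]
        · exact (Real.Gamma_strictMonoOn_Ici (by simp [Set.mem_Ici]; linarith)
            (by simp [Set.mem_Ici]; linarith) (by linarith)).le
      have hG1 : Real.Gamma (x + 1) = x * Real.Gamma x := Real.Gamma_add_one hx0.ne'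
      have hΓx : 0 < Real.Gamma x := Real.Gamma_pos_of_pos hx0
      rw [div_le_iff₀ (Real.Gamma_pos_of_pos (by linarith))]
      calc Real.Gamma x = x⁻¹ * (x * Real.Gamma x) := by field_simp
        _ ≤ x⁻¹ * Real.Gamma (x + β) := by
            apply mul_le_mul_of_nonneg_left _ (by positivity)
            rw [← hG1]; exact hmono
    · exact tendsto_inv_atTop_zero.comp hx




lemma beta_pos (hβ : β ∈ Set.Ioo (0:ℝ) 1 ∪ Set.Ioo (1:ℝ) 2) : 0 < β := by
  rcases hβ with h | h; exacts [h.1, by linarith [h.1]]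

lemma norm_mlc (hβ : 0 < β) (hγ : 0 < γ) (k : ℕ) :
    ‖mlc β γ k‖ = (Real.Gamma (β * k + γ))⁻¹ := by
  rw [mlc, norm_inv, Complex.norm_real, Real.norm_eq_abs,
    abs_of_pos (gamma_pos hβ hγ k)]

lemma radius_top (hβ : β ∈ Set.Ioo (0:ℝ) 1 ∪ Set.Ioo (1:ℝ) 2) (hγ : 0 < γ) :
    (ofScalars ℂ (mlc β γ)).radius = ⊤ := by
  have hβ0 := beta_pos hβ
  apply ofScalars_radius_eq_top_of_tendsto
  · exact Eventually.of_forall fun k => by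
      simp [mlc, Complex.ofReal_ne_zero, (gamma_pos hβ0 hγ k).ne']
  · have := tendsto_ratio hβ hγ
    refine this.congr fun k => ?_
    rw [norm_mlc hβ0 hγ, norm_mlc hβ0 hγ, inv_div_inv]
    push_cast
    ring_nf

/-- complex Mittag-Leffler -/
noncomputable def Eml (β γ : ℝ) (z : ℂ) : ℂ :=
  ∑' k : ℕ, z ^ k / ((Real.Gamma (β * k + γ) : ℝ) : ℂ)

lemma Eml_eq_sum : Eml β γ = (ofScalars ℂ (mlc β γ)).sum := by
  funext z
  rw [Eml, FormalMultilinearSeries.sum]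
  refine tsum_congr fun k => ?_
  rw [ofScalars_apply_eq, mlc, smul_eq_mul, div_eq_mul_inv, mul_comm]

lemma analyticAt_Eml (hβ : β ∈ Set.Ioo (0:ℝ) 1 ∪ Set.Ioo (1:ℝ) 2) (hγ : 0 < γ) (z : ℂ) :
    AnalyticAt ℂ (Eml β γ) z := by
  have h : HasFPowerSeriesOnBall (ofScalars ℂ (mlc β γ)).sum (ofScalars ℂ (mlc β γ)) 0
      (ofScalars ℂ (mlc β γ)).radius :=
    FormalMultilinearSeries.hasFPowerSeriesOnBall _ (by rw [radius_top hβ hγ]; exact ENNReal.zero_lt_top)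
  rw [Eml_eq_sum]
  exact (h.analyticAt_of_mem (by rw [radius_top hβ hγ]; simp [EMetric.mem_ball])).congr
    (Eventually.of_forall fun _ => rfl) |>.congr (by rfl)

lemma summable_norm_mlc (hβ : β ∈ Set.Ioo (0:ℝ) 1 ∪ Set.Ioo (1:ℝ) 2) (hγ : 0 < γ) (r : ℝ≥0) :
    Summable fun k : ℕ => (Real.Gamma (β * k + γ))⁻¹ * (r:ℝ) ^ k := by
  have := FormalMultilinearSeries.summable_norm_mul_pow (ofScalars ℂ (mlc β γ))
    (r := r) (by rw [radius_top hβ hγ]; exact ENNReal.coe_lt_top)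
  refine this.congr fun k => ?_
  rw [ofScalars_norm, norm_mlc (beta_pos hβ) hγ]

lemma summable_real (hβ : β ∈ Set.Ioo (0:ℝ) 1 ∪ Set.Ioo (1:ℝ) 2) (hγ : 0 < γ) (x : ℝ) :
    Summable fun k : ℕ => x ^ k / Real.Gamma (β * k + γ) := by
  apply Summable.of_norm
  refine (summable_norm_mlc hβ hγ ‖x‖₊).of_nonneg_of_le (fun k => norm_nonneg _) fun k => ?_
  rw [norm_div, norm_pow, Real.norm_eq_abs (Real.Gamma _),
    abs_of_pos (gamma_pos (beta_pos hβ) hγ k), div_eq_mul_inv, mul_comm]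
  simp [coe_nnnorm]

lemma ofReal_ml (hβ : β ∈ Set.Ioo (0:ℝ) 1 ∪ Set.Ioo (1:ℝ) 2) (hγ : 0 < γ) (x : ℝ) :
    ((∑' k : ℕ, x ^ k / Real.Gamma (β * k + γ) : ℝ) : ℂ) = Eml β γ x := by
  rw [Complex.ofReal_tsum]
  exact tsum_congr fun k => by push_cast; ring




section kern

variable {α lam : ℝ} (hα : α ∈ Set.Ioo (0:ℝ) 1 ∪ Set.Ioo (1:ℝ) 2) (hlam : 0 < lam)

lemma alpha_pos (hα : α ∈ Set.Ioo (0:ℝ) 1 ∪ Set.Ioo (1:ℝ) 2) : 0 < α := by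
  rcases hα with h | h; exacts [h.1, by linarith [h.1]]

/-- kernel -/
noncomputable def kern (α lam : ℝ) (z : ℂ) : ℂ :=
  z ^ ((α:ℂ)-1) * Eml α α (-(lam:ℂ) * z^(α:ℂ))

/-- derivative of kernel -/
noncomputable def kern' (α lam : ℝ) (z : ℂ) : ℂ :=
  ((α:ℂ)-1) * z ^ ((α:ℂ)-1-1) * Eml α α (-(lam:ℂ) * z^(α:ℂ)) +
  z ^ ((α:ℂ)-1) *
    (deriv (Eml α α) (-(lam:ℂ) * z^(α:ℂ)) * (-(lam:ℂ) * ((α:ℂ) * z^((α:ℂ)-1))))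

lemma hasDerivAt_kern (hα : α ∈ Set.Ioo (0:ℝ) 1 ∪ Set.Ioo (1:ℝ) 2)
    {w : ℂ} (hw : 0 < w.re) :
    HasDerivAt (kern α lam) (kern' α lam w) w := by
  have hslit : w ∈ slitPlane := mem_slitPlane_iff.2 (Or.inl hw)
  have hd1 : HasDerivAt (fun w : ℂ => w ^ ((α:ℂ)-1)) (((α:ℂ)-1) * w ^ ((α:ℂ)-1-1)) w :=
    (Complex.hasStrictDerivAt_cpow_const hslit).hasDerivAt
  have hd2 : HasDerivAt (fun w : ℂ => -(lam:ℂ) * w ^ (α:ℂ))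
      (-(lam:ℂ) * ((α:ℂ) * w ^ ((α:ℂ)-1))) w :=
    ((Complex.hasStrictDerivAt_cpow_const hslit).hasDerivAt).const_mul _
  have houter : HasDerivAt (Eml α α)
      (deriv (Eml α α) (-(lam:ℂ) * w ^ (α:ℂ))) (-(lam:ℂ) * w ^ (α:ℂ)) :=
    (analyticAt_Eml hα (alpha_pos hα) _).differentiableAt.hasDerivAt
  have hcomp := houter.comp w hd2
  unfold kern kern'
  exact hd1.mul hcomp

lemma continuous_Eml (hβ : β ∈ Set.Ioo (0:ℝ) 1 ∪ Set.Ioo (1:ℝ) 2) (hγ : 0 < γ) :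
    Continuous (Eml β γ) :=
  continuous_iff_continuousAt.2 fun z => (analyticAt_Eml hβ hγ z).continuousAt

lemma continuous_deriv_Eml (hβ : β ∈ Set.Ioo (0:ℝ) 1 ∪ Set.Ioo (1:ℝ) 2) (hγ : 0 < γ) :
    Continuous (deriv (Eml β γ)) := by
  have h : AnalyticOnNhd ℂ (Eml β γ) Set.univ := fun z _ => analyticAt_Eml hβ hγ z
  exact continuous_iff_continuousAt.2 fun z =>
    (h.deriv z (Set.mem_univ z)).continuousAt

lemma continuousOn_cpow_const (c : ℂ) :
    ContinuousOn (fun w : ℂ => w ^ c) {w : ℂ | 0 < w.re} := fun w hw =>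
  (continuousAt_cpow_const (mem_slitPlane_iff.2 (Or.inl hw))).continuousWithinAt

lemma continuousOn_inner (α lam : ℝ) :
    ContinuousOn (fun w : ℂ => -(lam:ℂ) * w ^ (α:ℂ)) {w : ℂ | 0 < w.re} :=
  continuousOn_const.mul (continuousOn_cpow_const _)

lemma continuousOn_kern (hα : α ∈ Set.Ioo (0:ℝ) 1 ∪ Set.Ioo (1:ℝ) 2) :
    ContinuousOn (kern α lam) {w : ℂ | 0 < w.re} := by
  exact (continuousOn_cpow_const _).mul
    ((continuous_Eml hα (alpha_pos hα)).comp_continuousOn (continuousOn_inner α lam))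

lemma continuousOn_kern' (hα : α ∈ Set.Ioo (0:ℝ) 1 ∪ Set.Ioo (1:ℝ) 2) :
    ContinuousOn (kern' α lam) {w : ℂ | 0 < w.re} := by
  refine ContinuousOn.add ?_ ?_
  · exact (continuousOn_const.mul (continuousOn_cpow_const _)).mul
      ((continuous_Eml hα (alpha_pos hα)).comp_continuousOn (continuousOn_inner α lam))
  · refine (continuousOn_cpow_const _).mul ?_
    exact ((continuous_deriv_Eml hα (alpha_pos hα)).comp_continuousOn
        (continuousOn_inner α lam)).mul
      (continuousOn_const.mul (continuousOn_const.mul (continuousOn_cpow_const _)))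

end kern

section integralpart

variable {α lam T : ℝ}

lemma re_pos_of_mem (hT : 0 < T) {z₀ z : ℂ} (hz₀ : T < z₀.re)
    (hz : z ∈ closedBall z₀ ((z₀.re - T)/2)) {s : ℝ} (hs : s ∈ Icc 0 T) :
    0 < (z - (s:ℂ)).re := by
  have h1 : |(z - z₀).re| ≤ (z₀.re - T)/2 := (abs_re_le_norm _).trans (mem_closedBall_iff_norm.1 hz)
  have h2 := abs_le.1 h1
  simp only [sub_re, ofReal_re] at h2 ⊢
  linarith [h2.1, h2.2, hs.2]

lemma diffAt_F (hα : α ∈ Set.Ioo (0:ℝ) 1 ∪ Set.Ioo (1:ℝ) 2) (hT : 0 < T)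
    (μ : ℝ → ℝ) (hμ : MemLp μ ⊤ (volume.restrict (Set.Ioo (0:ℝ) T)))
    {z₀ : ℂ} (hz₀ : T < z₀.re) :
    DifferentiableAt ℂ
      (fun z : ℂ => ∫ s in Set.Ioo (0:ℝ) T, kern α lam (z - (s:ℂ)) * ((μ s : ℝ) : ℂ)) z₀ := by
  haveI : IsFiniteMeasure (volume.restrict (Set.Ioo (0:ℝ) T)) :=
    ⟨by rw [Measure.restrict_apply_univ, Real.volume_Ioo]; exact ENNReal.ofReal_lt_top⟩
  set ν := volume.restrict (Set.Ioo (0:ℝ) T) with hν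
  set ε := (z₀.re - T)/2 with hε
  have hεpos : 0 < ε := by simp only [hε]; linarith
  have hμint : Integrable μ ν := hμ.integrable le_top
  have hμintℂ : Integrable (fun s => (μ s : ℂ)) ν := by
    simpa using (Complex.ofRealCLM : ℝ →L[ℝ] ℂ).integrable_comp hμint
  have hμmeas : AEStronglyMeasurable (fun s => (μ s : ℂ)) ν :=
    Complex.continuous_ofReal.comp_aestronglyMeasurable hμ.1
  -- compactness bounds
  have hScomp : IsCompact (closedBall z₀ ε ×ˢ Icc (0:ℝ) T) :=
    (isCompact_closedBall _ _).prod isCompact_Icc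
  have hmaps : MapsTo (fun p : ℂ × ℝ => p.1 - (p.2 : ℂ))
      (closedBall z₀ ε ×ˢ Icc (0:ℝ) T) {w : ℂ | 0 < w.re} := fun p hp =>
    re_pos_of_mem hT hz₀ hp.1 hp.2
  have hsubcont : Continuous (fun p : ℂ × ℝ => p.1 - (p.2 : ℂ)) :=
    continuous_fst.sub (Complex.continuous_ofReal.comp continuous_snd)
  obtain ⟨C₁, hC₁⟩ := hScomp.exists_bound_of_continuousOn
    ((continuousOn_kern' hα).comp hsubcont.continuousOn hmaps)
  obtain ⟨C₀, hC₀⟩ := hScomp.exists_bound_of_continuousOn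
    ((continuousOn_kern hα).comp hsubcont.continuousOn hmaps)
  -- measurability of the kernels in s
  have hmeasK : ∀ z ∈ closedBall z₀ ε,
      AEStronglyMeasurable (fun s : ℝ => kern α lam (z - ↑s) * (μ s : ℂ)) ν := by
    intro z hz
    refine AEStronglyMeasurable.mul ?_ hμmeas
    refine (ContinuousOn.aestronglyMeasurable ?_ measurableSet_Ioo)
    refine (continuousOn_kern hα).comp
      ((continuous_const.sub Complex.continuous_ofReal).continuousOn) ?_
    intro s hs
    exact re_pos_of_mem hT hz₀ hz (Ioo_subset_Icc_self hs)
  have hmeasK' : AEStronglyMeasurable (fun s : ℝ => kern' α lam (z₀ - ↑s) * (μ s : ℂ)) ν := by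
    refine AEStronglyMeasurable.mul ?_ hμmeas
    refine (ContinuousOn.aestronglyMeasurable ?_ measurableSet_Ioo)
    refine (continuousOn_kern' hα).comp
      ((continuous_const.sub Complex.continuous_ofReal).continuousOn) ?_
    intro s hs
    exact re_pos_of_mem hT hz₀ (mem_closedBall_self hεpos.le) (Ioo_subset_Icc_self hs)
  have key := hasDerivAt_integral_of_dominated_loc_of_deriv_le (μ := ν)
    (F := fun z s => kern α lam (z - ↑s) * (μ s : ℂ))
    (F' := fun z s => kern' α lam (z - ↑s) * (μ s : ℂ))
    (x₀ := z₀) (bound := fun s => C₁ * ‖μ s‖) (ball_mem_nhds z₀ hεpos)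
    ?_ ?_ ?_ ?_ ?_ ?_
  · exact key.2.differentiableAt
  · filter_upwards [closedBall_mem_nhds z₀ hεpos] with z hz using hmeasK z hz
  · refine (hμint.norm.const_mul C₀).mono' (hmeasK z₀ (mem_closedBall_self hεpos.le)) ?_
    filter_upwards [ae_restrict_mem measurableSet_Ioo] with s hs
    rw [norm_mul]
    gcongr
    · exact ((norm_nonneg _).trans (hC₀ (z₀, s)
        ⟨mem_closedBall_self hεpos.le, Ioo_subset_Icc_self hs⟩))
    · exact hC₀ (z₀, s) ⟨mem_closedBall_self hεpos.le, Ioo_subset_Icc_self hs⟩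
    · simp
  · exact hmeasK'
  · filter_upwards [ae_restrict_mem measurableSet_Ioo] with s hs z hz
    rw [norm_mul]
    gcongr
    · exact (norm_nonneg _).trans (hC₁ (z, s) ⟨ball_subset_closedBall hz, Ioo_subset_Icc_self hs⟩)
    · exact hC₁ (z, s) ⟨ball_subset_closedBall hz, Ioo_subset_Icc_self hs⟩
    · simp
  · exact hμint.norm.const_mul C₁
  · filter_upwards [ae_restrict_mem measurableSet_Ioo] with s hs z hz
    have hre : 0 < (z - (s:ℂ)).re :=
      re_pos_of_mem hT hz₀ (ball_subset_closedBall hz) (Ioo_subset_Icc_self hs)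
    have hk := (hasDerivAt_kern (lam := lam) hα hre).comp z ((hasDerivAt_id z).sub_const (s:ℂ))
    simpa using hk.mul_const ((μ s : ℂ))

end integralpart

end MLaux

open MLaux

/-- Scalar analogue of Lemma 4: the solution
`u(t) = a E_{α,1}(−λt^α) + b t E_{α,2}(−λt^α)
        + ∫₀^T (t−s)^{α−1} E_{α,α}(−λ(t−s)^α) μ(s) ds`
is real-analytic on `(T,∞)`. -/
theorem solution_analytic_on_Ioi (α lam T : ℝ)
    (hα : α ∈ Set.Ioo (0:ℝ) 1 ∪ Set.Ioo (1:ℝ) 2) (hlam : 0 < lam) (hT : 0 < T)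
    (a b : ℝ) (μ : ℝ → ℝ)
    (hμ : MemLp μ ⊤ (volume.restrict (Set.Ioo (0:ℝ) T))) :
    AnalyticOnNhd ℝ
      (fun t : ℝ =>
        a * mittagLeffler α 1 (-lam * t ^ α) +
        b * t * mittagLeffler α 2 (-lam * t ^ α) +
        ∫ s in Set.Ioo (0:ℝ) T,
          (t - s) ^ (α - 1) * mittagLeffler α α (-lam * (t - s) ^ α) * μ s)
      (Set.Ioi T) := by
  have hαpos : 0 < α := alpha_pos hα
  set G : ℂ → ℂ := fun z =>
    (a:ℂ) * Eml α 1 (-(lam:ℂ) * z ^ (α:ℂ)) + (b:ℂ) * z * Eml α 2 (-(lam:ℂ) * z ^ (α:ℂ)) +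
      ∫ s in Set.Ioo (0:ℝ) T, kern α lam (z - (s:ℂ)) * ((μ s : ℝ) : ℂ) with hGdef
  have hopen : IsOpen {z : ℂ | T < z.re} := isOpen_lt continuous_const continuous_re
  -- G is analytic on the half plane
  have hG : AnalyticOnNhd ℂ G {z : ℂ | T < z.re} := by
    apply DifferentiableOn.analyticOnNhd ?_ hopen
    intro z hz
    apply DifferentiableAt.differentiableWithinAt
    have hzre : 0 < z.re := lt_trans hT hz
    have hslit : z ∈ slitPlane := mem_slitPlane_iff.2 (Or.inl hzre)
    have hpow : DifferentiableAt ℂ (fun z : ℂ => z ^ (α:ℂ)) z :=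
      (Complex.hasStrictDerivAt_cpow_const hslit).hasDerivAt.differentiableAt
    have hinner : DifferentiableAt ℂ (fun z : ℂ => -(lam:ℂ) * z ^ (α:ℂ)) z :=
      hpow.const_mul _
    have hE1 : DifferentiableAt ℂ (fun z : ℂ => Eml α 1 (-(lam:ℂ) * z ^ (α:ℂ))) z :=
      ((analyticAt_Eml hα one_pos _).differentiableAt).comp z hinner
    have hE2 : DifferentiableAt ℂ (fun z : ℂ => Eml α 2 (-(lam:ℂ) * z ^ (α:ℂ))) z :=
      ((analyticAt_Eml hα two_pos _).differentiableAt).comp z hinner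
    exact (((differentiableAt_const _).mul hE1).add
      (((differentiableAt_const _).mul differentiableAt_fun_id).mul hE2)).add
      (diffAt_F hα hT μ hμ hz)
  -- the real function agrees with re ∘ G ∘ ofReal on Ioi T
  have hagree : ∀ t ∈ Set.Ioi T, (G t).re =
      a * mittagLeffler α 1 (-lam * t ^ α) + b * t * mittagLeffler α 2 (-lam * t ^ α) +
        ∫ s in Set.Ioo (0:ℝ) T,
          (t - s) ^ (α - 1) * mittagLeffler α α (-lam * (t - s) ^ α) * μ s := by
    intro t ht
    have htpos : 0 < t := lt_trans hT ht
    have e1 : (-(lam:ℂ) * (t:ℂ) ^ (α:ℂ)) = ((-lam * t ^ α : ℝ) : ℂ) := by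
      rw [Complex.ofReal_mul, Complex.ofReal_cpow htpos.le]
      push_cast; ring
    have eint : (∫ s in Set.Ioo (0:ℝ) T, kern α lam ((t:ℂ) - (s:ℂ)) * ((μ s : ℝ) : ℂ)) =
        ((∫ s in Set.Ioo (0:ℝ) T,
          (t - s) ^ (α - 1) * mittagLeffler α α (-lam * (t - s) ^ α) * μ s : ℝ) : ℂ) := by
      rw [show ((∫ s in Set.Ioo (0:ℝ) T,
          (t - s) ^ (α - 1) * mittagLeffler α α (-lam * (t - s) ^ α) * μ s : ℝ) : ℂ) =
          ∫ s in Set.Ioo (0:ℝ) T, (((t - s) ^ (α - 1) *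
            mittagLeffler α α (-lam * (t - s) ^ α) * μ s : ℝ) : ℂ) from integral_ofReal.symm]
      apply setIntegral_congr_fun measurableSet_Ioo
      intro s hs
      show _ = ((_ : ℝ) : ℂ)
      have hts : (0:ℝ) < t - s := by simp only [mem_Ioo] at hs; linarith [hs.2, mem_Ioi.1 ht]
      have h1 : ((t - s : ℝ) : ℂ) = (t:ℂ) - (s:ℂ) := by push_cast; ring
      have h2 : ((t:ℂ) - (s:ℂ)) ^ ((α:ℂ) - 1) = (((t - s) ^ (α - 1) : ℝ) : ℂ) := by
        rw [Complex.ofReal_cpow hts.le, h1]; push_cast; ring_nf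
      have h3 : (-(lam:ℂ) * ((t:ℂ) - (s:ℂ)) ^ (α:ℂ)) = ((-lam * (t - s) ^ α : ℝ) : ℂ) := by
        rw [Complex.ofReal_mul, Complex.ofReal_cpow hts.le, h1]; push_cast; ring
      simp only [kern, h2, h3, ← ofReal_ml hα hαpos]
      rw [show mittagLeffler α α (-lam * (t - s) ^ α) =
        ∑' k : ℕ, (-lam * (t - s) ^ α) ^ k / Real.Gamma (α * k + α) from rfl]
      push_cast
      ring
    have hm1 := ofReal_ml hα one_pos (-lam * t ^ α)
    have hm2 := ofReal_ml hα two_pos (-lam * t ^ α)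
    have hgt : G t = ((a * mittagLeffler α 1 (-lam * t ^ α) +
        b * t * mittagLeffler α 2 (-lam * t ^ α) +
        ∫ s in Set.Ioo (0:ℝ) T,
          (t - s) ^ (α - 1) * mittagLeffler α α (-lam * (t - s) ^ α) * μ s : ℝ) : ℂ) := by
      rw [hGdef]
      simp only [e1, eint, ← hm1, ← hm2, mittagLeffler]
      norm_cast
    rw [hgt, Complex.ofReal_re]
  -- conclude
  intro t ht
  have hGt : AnalyticAt ℂ G (t : ℂ) := hG _ (by simpa using ht)
  have hcomp : AnalyticAt ℝ (fun t : ℝ => G (t : ℂ)) t :=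
    (hGt.restrictScalars).comp ((Complex.ofRealCLM).analyticAt t)
  have hre : AnalyticAt ℝ (fun t : ℝ => (G (t : ℂ)).re) t :=
    ((Complex.reCLM).analyticAt _).comp hcomp
  apply hre.congr
  filter_upwards [Ioi_mem_nhds ht] with t' ht'
  exact hagree t' ht'
end
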